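/- Let n ∈ ℕ and let α, ε be positive real numbers with α < ε. Then there exist positive constants β₁ = β₁(α,ε) and β₂ = β₂(α,ε,n) such that for every ξ, η ∈ ℝ^n one has β₁ |H_ε(ξ) − H_ε(η)| ≤ |H_α(ξ) − H_α(η)| · ( (|ξ|−1)_+^ε + (|η|−1)_+^ε )^{(ε−α)/ε} ≤ β₂ |H_ε(ξ) − H_ε(η)|. -/

import Mathlib

open Real

section Aux

lemma aux_lower {a b s : ℝ} (hb : 0 ≤ b) (hba : b ≤ a) (hs : 1 < s) :
    a ^ (s - 1) * (a - b) ≤ a ^ s - b ^ s := by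
  have ha : 0 ≤ a := hb.trans hba
  have e1 : ∀ x : ℝ, 0 ≤ x → x ^ s = x ^ (s - 1) * x := by
    intro x hx
    have h := Real.rpow_add' hx (y := s - 1) (z := 1) (by rw [sub_add_cancel]; linarith)
    rw [sub_add_cancel] at h
    rw [h, Real.rpow_one]
  have h1 : b ^ s = b ^ (s - 1) * b := e1 b hb
  have h2 : a ^ s = a ^ (s - 1) * a := e1 a ha
  have h3 : b ^ (s - 1) ≤ a ^ (s - 1) :=
    Real.rpow_le_rpow hb hba (by linarith)
  have h4 : (0:ℝ) ≤ b ^ (s-1) := Real.rpow_nonneg hb _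
  nlinarith [Real.rpow_nonneg ha (s-1)]

lemma aux_upper {a b r : ℝ} (hb : 0 ≤ b) (hba : b ≤ a) (hr : 0 < r) :
    (a ^ r - b ^ r) * b ≤ max r 1 * (a ^ r * (a - b)) := by
  have ha : 0 ≤ a := hb.trans hba
  rcases eq_or_lt_of_le ha with h | hapos
  · have hb0 : b = 0 := le_antisymm (by linarith) hb
    simp [← h, hb0, Real.zero_rpow hr.ne']
  have key : ∀ t : ℝ, 0 ≤ t → t ≤ 1 → (1 - t ^ r) * t ≤ max r 1 * (1 - t) := by
    intro t ht ht1
    have htr1 : t ^ r ≤ 1 := Real.rpow_le_one ht ht1 hr.le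
    have hmax1 : (1:ℝ) ≤ max r 1 := le_max_right _ _
    have key2 : 1 - t ^ r ≤ max r 1 * (1 - t) := by
      rcases le_or_gt r 1 with hr1 | hr1
      · have : t ≤ t ^ r := by
          rcases eq_or_lt_of_le ht with h0 | h0
          · rcases eq_or_lt_of_le hr.le with h' | h'
            · simp [← h0, Real.zero_rpow hr.ne']
            · simp [← h0, Real.zero_rpow hr.ne']
          · calc t = t ^ (1:ℝ) := (Real.rpow_one t).symm
              _ ≤ t ^ r := Real.rpow_le_rpow_of_exponent_ge h0 ht1 hr1
        nlinarith
      · have hber := one_add_mul_self_le_rpow_one_add (s := t - 1) (by linarith) (p := r) hr1.le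
        have : (1 : ℝ) + r * (t - 1) ≤ t ^ r := by simpa using hber
        have hm : max r 1 = r := max_eq_left hr1.le
        rw [hm]; nlinarith
    nlinarith [mul_nonneg (sub_nonneg.2 htr1) (sub_nonneg.2 ht1), sub_nonneg.2 htr1]
  have := key (b / a) (div_nonneg hb ha) (div_le_one_of_le₀ hba ha)
  have hbr : b ^ r = (b/a) ^ r * a ^ r := by
    rw [← Real.mul_rpow (div_nonneg hb ha) ha]
    rw [div_mul_cancel₀ _ hapos.ne']
  have har : 0 < a ^ r := Real.rpow_pos_of_pos hapos r
  have h2 := mul_le_mul_of_nonneg_left this (le_of_lt (mul_pos har hapos))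
  calc (a ^ r - b ^ r) * b = a ^ r * a * ((1 - (b/a) ^ r) * (b/a)) := by
        rw [hbr]
        have hab : b = a * (b / a) := by field_simp
        linear_combination (a ^ r - (b / a) ^ r * a ^ r) * hab
    _ ≤ a ^ r * a * (max r 1 * (1 - b/a)) := h2
    _ = max r 1 * (a ^ r * (a - b)) := by field_simp

variable {F : Type*} [NormedAddCommGroup F] [InnerProductSpace ℝ F]
local notation "⟪" x ", " y "⟫" => inner (𝕜 := ℝ) x y

lemma keyB {a b p s : ℝ} (hb : 0 ≤ b) (hba : b ≤ a) (hp : p ≤ a * b) (hs : 1 < s) :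
    ((2:ℝ)⁻¹) ^ s * ((a + b) ^ (s - 1) * (a ^ 2 + b ^ 2 - 2 * p)) ≤
      a ^ (s - 1) * (a ^ 2 - p) + b ^ (s - 1) * (b ^ 2 - p) := by
  have ha : 0 ≤ a := hb.trans hba
  have hs1 : (0:ℝ) < s - 1 := by linarith
  set A := a ^ (s - 1) with hA
  set B := b ^ (s - 1) with hB
  set T := (a + b) ^ (s - 1) with hT
  set c := ((2:ℝ)⁻¹) ^ s with hc
  have hA0 : 0 ≤ A := Real.rpow_nonneg ha _
  have hB0 : 0 ≤ B := Real.rpow_nonneg hb _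
  have hT0 : 0 ≤ T := Real.rpow_nonneg (by linarith) _
  have hc0 : 0 < c := Real.rpow_pos_of_pos (by norm_num) _
  have e1 : ∀ x : ℝ, 0 ≤ x → x ^ s = x ^ (s - 1) * x := by
    intro x hx
    have h := Real.rpow_add' hx (y := s - 1) (z := 1) (by rw [sub_add_cancel]; linarith)
    rw [sub_add_cancel] at h
    rw [h, Real.rpow_one]
  have hTA : 2 * c * T ≤ A := by
    have h1 : T ≤ (2 * a) ^ (s - 1) :=
      Real.rpow_le_rpow (by linarith) (by linarith) (by linarith)
    have h2 : (2 * a) ^ (s - 1) = 2 ^ (s - 1) * A := by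
      rw [hA, Real.mul_rpow (by norm_num) ha]
    have h3 : c * 2 ^ (s - 1) = 2⁻¹ := by
      have h2s : (0:ℝ) < 2 ^ s := Real.rpow_pos_of_pos (by norm_num) s
      rw [hc, Real.inv_rpow (by norm_num : (0:ℝ) ≤ 2),
        show s - 1 = s + (-1) by ring, Real.rpow_add (by norm_num : (0:ℝ) < 2),
        Real.rpow_neg_one]
      field_simp
    nlinarith [mul_le_mul_of_nonneg_left h1 (le_of_lt hc0)]
  have hfA : a ^ s = A * a := e1 a ha
  have hfB : b ^ s = B * b := e1 b hb
  have hBA : B ≤ A := Real.rpow_le_rpow hb hba hs1.le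
  have hcTA : c * T ≤ A := by nlinarith
  have hlow : A * (a - b) ≤ a ^ s - b ^ s := aux_lower hb hba hs
  have term1 : c * T * (a - b) ^ 2 ≤ (A * a - B * b) * (a - b) := by
    have h4 : A * (a - b) * (a - b) ≤ (A * a - B * b) * (a - b) := by
      have := mul_le_mul_of_nonneg_right hlow (sub_nonneg.2 hba)
      nlinarith
    nlinarith [mul_le_mul_of_nonneg_right (mul_le_mul_of_nonneg_right hcTA (sub_nonneg.2 hba)) (sub_nonneg.2 hba)]
  have term2 : 0 ≤ (a * b - p) * (A + B - 2 * c * T) :=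
    mul_nonneg (by linarith) (by linarith)
  nlinarith [term1, term2]

lemma lemB {s : ℝ} (hs : 1 < s) (U V : F) (hba : ‖V‖ ≤ ‖U‖) :
    (‖U‖ + ‖V‖) ^ (s - 1) * ‖U - V‖ ≤
      2 ^ s * ‖(‖U‖ ^ (s - 1)) • U - (‖V‖ ^ (s - 1)) • V‖ := by
  rcases eq_or_ne U V with rfl | hne
  · simp
  have hUV : 0 < ‖U - V‖ := by
    rw [norm_pos_iff, sub_ne_zero]; exact hne
  set a := ‖U‖ with hax
  set b := ‖V‖ with hbx
  set W := (a ^ (s - 1)) • U - (b ^ (s - 1)) • V with hW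
  set p : ℝ := ⟪U, V⟫ with hp
  have hb0 : (0:ℝ) ≤ b := norm_nonneg _
  have hinner : ⟪W, U - V⟫ = a ^ (s - 1) * (a ^ 2 - p) + b ^ (s - 1) * (b ^ 2 - p) := by
    simp only [hW, inner_sub_left, inner_sub_right, real_inner_smul_left,
      real_inner_self_eq_norm_sq, ← hax, ← hbx]
    rw [hp, real_inner_comm V U]
    ring
  have hnorm2 : ‖U - V‖ ^ 2 = a ^ 2 + b ^ 2 - 2 * p := by
    rw [norm_sub_sq_real]; ring
  have hkey := keyB hb0 hba (real_inner_le_norm U V) hs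
  have hCS : ⟪W, U - V⟫ ≤ ‖W‖ * ‖U - V‖ := real_inner_le_norm W (U - V)
  have hmain : ((2:ℝ)⁻¹) ^ s * ((a + b) ^ (s - 1) * ‖U - V‖ ^ 2) ≤ ‖W‖ * ‖U - V‖ := by
    rw [hnorm2]
    exact le_trans hkey (by rw [← hinner] at *; linarith)
  have h2s : (0:ℝ) < 2 ^ s := Real.rpow_pos_of_pos (by norm_num) s
  have hinv : ((2:ℝ)⁻¹) ^ s = ((2:ℝ) ^ s)⁻¹ := Real.inv_rpow (by norm_num) s
  rw [hinv] at hmain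
  rw [show ‖U - V‖ ^ 2 = ‖U - V‖ * ‖U - V‖ from sq ‖U - V‖] at hmain
  have := mul_le_mul_of_nonneg_left hmain h2s.le
  rw [← mul_assoc, mul_inv_cancel₀ h2s.ne', one_mul] at this
  have h4 : ((a + b) ^ (s - 1) * ‖U - V‖) * ‖U - V‖ ≤ (2 ^ s * ‖W‖) * ‖U - V‖ := by
    nlinarith [this]
  exact le_of_mul_le_mul_right h4 hUV

lemma lemA {s : ℝ} (hs : 1 < s) (U V : F) (hba : ‖V‖ ≤ ‖U‖) :
    ‖(‖U‖ ^ (s - 1)) • U - (‖V‖ ^ (s - 1)) • V‖ ≤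
      (1 + s) * ((‖U‖ + ‖V‖) ^ (s - 1) * ‖U - V‖) := by
  set a := ‖U‖ with hax
  set b := ‖V‖ with hbx
  have hb0 : (0:ℝ) ≤ b := norm_nonneg _
  have ha0 : (0:ℝ) ≤ a := norm_nonneg _
  have hs1 : (0:ℝ) < s - 1 := by linarith
  have hsplit : (a ^ (s - 1)) • U - (b ^ (s - 1)) • V
      = (a ^ (s - 1)) • (U - V) + (a ^ (s - 1) - b ^ (s - 1)) • V := by
    rw [smul_sub, sub_smul]; abel
  have hmono : b ^ (s - 1) ≤ a ^ (s - 1) := Real.rpow_le_rpow hb0 hba hs1.le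
  have h1 : ‖(a ^ (s - 1)) • U - (b ^ (s - 1)) • V‖
      ≤ a ^ (s - 1) * ‖U - V‖ + (a ^ (s - 1) - b ^ (s - 1)) * b := by
    rw [hsplit]
    refine le_trans (norm_add_le _ _) ?_
    rw [norm_smul, norm_smul, Real.norm_of_nonneg (Real.rpow_nonneg ha0 _),
      Real.norm_of_nonneg (by linarith)]
  have h2 : (a ^ (s - 1) - b ^ (s - 1)) * b ≤ max (s - 1) 1 * (a ^ (s - 1) * (a - b)) :=
    aux_upper hb0 hba hs1
  have habn : a - b ≤ ‖U - V‖ := by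
    have := norm_sub_norm_le U V
    rw [← hax, ← hbx] at this; linarith
  have hmax : max (s - 1) 1 ≤ s := max_le (by linarith) hs.le
  have hAa : (0:ℝ) ≤ a ^ (s - 1) := Real.rpow_nonneg ha0 _
  have hT : a ^ (s - 1) ≤ (a + b) ^ (s - 1) :=
    Real.rpow_le_rpow ha0 (by linarith) hs1.le
  have h3 : (a ^ (s - 1) - b ^ (s - 1)) * b ≤ s * (a ^ (s - 1) * ‖U - V‖) := by
    refine le_trans h2 ?_
    have hab0 : 0 ≤ a - b := sub_nonneg.2 hba
    have : a ^ (s - 1) * (a - b) ≤ a ^ (s - 1) * ‖U - V‖ :=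
      mul_le_mul_of_nonneg_left habn hAa
    nlinarith [mul_nonneg hAa hab0]
  calc ‖(a ^ (s - 1)) • U - (b ^ (s - 1)) • V‖
      ≤ a ^ (s - 1) * ‖U - V‖ + s * (a ^ (s - 1) * ‖U - V‖) := by linarith
    _ = (1 + s) * (a ^ (s - 1) * ‖U - V‖) := by ring
    _ ≤ (1 + s) * ((a + b) ^ (s - 1) * ‖U - V‖) := by
        have := mul_le_mul_of_nonneg_right hT (norm_nonneg (U - V))
        nlinarith

end Aux

/-- The map `H_γ : ℝ^n → ℝ^n`, `H_γ(ξ) = (|ξ|−1)₊^γ · ξ/|ξ|` for `ξ ≠ 0`, `H_γ(0) = 0`. -/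
noncomputable def Hfun {n : ℕ} (γ : ℝ) (ξ : EuclideanSpace ℝ (Fin n)) :
    EuclideanSpace ℝ (Fin n) :=
  open Classical in
  if ξ = (0 : EuclideanSpace ℝ (Fin n)) then 0 else (max (‖ξ‖ - 1) 0) ^ γ • ‖ξ‖⁻¹ • ξ

lemma norm_Hfun {n : ℕ} {γ : ℝ} (hγ : 0 < γ) (ξ : EuclideanSpace ℝ (Fin n)) :
    ‖Hfun γ ξ‖ = (max (‖ξ‖ - 1) 0) ^ γ := by
  unfold Hfun
  split_ifs with h
  · subst h
    simp [Real.zero_rpow hγ.ne']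
  · have hξ : 0 < ‖ξ‖ := norm_pos_iff.2 h
    rw [norm_smul, norm_smul, norm_inv, norm_norm,
      Real.norm_of_nonneg (Real.rpow_nonneg (le_max_right _ _) _)]
    field_simp

lemma Hfun_comp {n : ℕ} {α ε : ℝ} (hα : 0 < α) (hαε : α < ε)
    (ξ : EuclideanSpace ℝ (Fin n)) :
    Hfun ε ξ = (‖Hfun α ξ‖ ^ (ε / α - 1)) • Hfun α ξ := by
  by_cases h : ξ = 0
  · subst h; simp [Hfun]
  · rw [norm_Hfun hα]
    unfold Hfun
    rw [if_neg h, if_neg h]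
    set a := max (‖ξ‖ - 1) 0 with ha
    have ha0 : 0 ≤ a := le_max_right _ _
    have hexp : α * (ε / α - 1) + α = ε := by field_simp; ring
    have hsc : (a ^ α) ^ (ε / α - 1) * a ^ α = a ^ ε := by
      rw [← Real.rpow_mul ha0, ← Real.rpow_add' ha0 (by rw [hexp]; linarith), hexp]
    rw [show a ^ ε = (a ^ α) ^ (ε / α - 1) * a ^ α from hsc.symm, ← smul_smul]

lemma main_pair {n : ℕ} {α ε : ℝ} (hα : 0 < α) (hε : 0 < ε) (hαε : α < ε)
    (ξ η : EuclideanSpace ℝ (Fin n))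
    (hba : max (‖η‖ - 1) 0 ≤ max (‖ξ‖ - 1) 0) :
    ((1 + ε / α) * 2 ^ (ε / α - 1))⁻¹ * ‖Hfun ε ξ - Hfun ε η‖ ≤
        ‖Hfun α ξ - Hfun α η‖ *
          ((max (‖ξ‖ - 1) 0) ^ ε + (max (‖η‖ - 1) 0) ^ ε) ^ ((ε - α) / ε) ∧
      ‖Hfun α ξ - Hfun α η‖ *
          ((max (‖ξ‖ - 1) 0) ^ ε + (max (‖η‖ - 1) 0) ^ ε) ^ ((ε - α) / ε) ≤
        (2 ^ ((ε - α) / ε) * 2 ^ (ε / α)) * ‖Hfun ε ξ - Hfun ε η‖ := by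
  set s := ε / α with hsdef
  have hs : 1 < s := (one_lt_div hα).2 hαε
  set q := (ε - α) / ε with hqdef
  have hq0 : 0 ≤ q := div_nonneg (by linarith) hε.le
  set a := max (‖ξ‖ - 1) 0 with hadef
  set b := max (‖η‖ - 1) 0 with hbdef
  have ha0 : (0:ℝ) ≤ a := le_max_right _ _
  have hb0 : (0:ℝ) ≤ b := le_max_right _ _
  set U := Hfun α ξ with hUdef
  set V := Hfun α η with hVdef
  have hUn : ‖U‖ = a ^ α := norm_Hfun hα ξ
  have hVn : ‖V‖ = b ^ α := norm_Hfun hα η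
  have hbaU : ‖V‖ ≤ ‖U‖ := by
    rw [hUn, hVn]; exact Real.rpow_le_rpow hb0 hba hα.le
  have hE : Hfun ε ξ - Hfun ε η = (‖U‖ ^ (s - 1)) • U - (‖V‖ ^ (s - 1)) • V := by
    rw [Hfun_comp hα hαε ξ, Hfun_comp hα hαε η]
  have hA := lemA hs U V hbaU
  have hB := lemB hs U V hbaU
  rw [← hE] at hA hB
  set T := (‖U‖ + ‖V‖) ^ (s - 1) with hTdef
  set S := (a ^ ε + b ^ ε) ^ q with hSdef
  set D := ‖U - V‖ with hDdef
  set E := ‖Hfun ε ξ - Hfun ε η‖ with hEdef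
  have hD0 : 0 ≤ D := norm_nonneg _
  have hE0 : 0 ≤ E := norm_nonneg _
  have hs1 : (0:ℝ) < s - 1 := by linarith
  have hbεaε : b ^ ε ≤ a ^ ε := Real.rpow_le_rpow hb0 hba hε.le
  have haε0 : (0:ℝ) ≤ a ^ ε := Real.rpow_nonneg ha0 _
  have hbε0 : (0:ℝ) ≤ b ^ ε := Real.rpow_nonneg hb0 _
  have hbαaα : b ^ α ≤ a ^ α := Real.rpow_le_rpow hb0 hba hα.le
  have haα0 : (0:ℝ) ≤ a ^ α := Real.rpow_nonneg ha0 _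
  have hbα0 : (0:ℝ) ≤ b ^ α := Real.rpow_nonneg hb0 _
  have hm0 : (0:ℝ) ≤ a ^ (ε - α) := Real.rpow_nonneg ha0 _
  -- exponent identities
  have hids : α * (s - 1) = ε - α := by rw [hsdef]; field_simp
  have hidq : ε * q = ε - α := by rw [hqdef]; field_simp
  -- T bounds
  have hT1 : a ^ (ε - α) ≤ T := by
    rw [hTdef, hUn, hVn, ← hids, Real.rpow_mul ha0]
    exact Real.rpow_le_rpow haα0 (by linarith) hs1.le
  have hT2 : T ≤ 2 ^ (s - 1) * a ^ (ε - α) := by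
    rw [hTdef, hUn, hVn, ← hids, Real.rpow_mul ha0]
    calc (a ^ α + b ^ α) ^ (s - 1) ≤ (2 * a ^ α) ^ (s - 1) :=
          Real.rpow_le_rpow (by linarith) (by linarith) hs1.le
      _ = 2 ^ (s - 1) * (a ^ α) ^ (s - 1) := Real.mul_rpow (by norm_num) haα0
  -- S bounds
  have hS1 : a ^ (ε - α) ≤ S := by
    rw [hSdef, ← hidq, Real.rpow_mul ha0]
    exact Real.rpow_le_rpow haε0 (by linarith) hq0
  have hS2 : S ≤ 2 ^ q * a ^ (ε - α) := by
    rw [hSdef, ← hidq, Real.rpow_mul ha0]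
    calc (a ^ ε + b ^ ε) ^ q ≤ (2 * a ^ ε) ^ q :=
          Real.rpow_le_rpow (by linarith) (by linarith) hq0
      _ = 2 ^ q * (a ^ ε) ^ q := Real.mul_rpow (by norm_num) haε0
  have hS0 : 0 ≤ S := hm0.trans hS1
  have hT0 : 0 ≤ T := hm0.trans hT1
  have h2s1 : (0:ℝ) < 2 ^ (s - 1) := Real.rpow_pos_of_pos (by norm_num) _
  have h2q : (0:ℝ) < 2 ^ q := Real.rpow_pos_of_pos (by norm_num) _
  have h2s : (0:ℝ) < 2 ^ s := Real.rpow_pos_of_pos (by norm_num) _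
  constructor
  · -- left inequality
    have hC : (0:ℝ) < (1 + s) * 2 ^ (s - 1) := by nlinarith
    rw [inv_mul_le_iff₀ hC]
    have hTle : T ≤ 2 ^ (s - 1) * S :=
      hT2.trans (mul_le_mul_of_nonneg_left hS1 h2s1.le)
    have step : E ≤ (1 + s) * ((2 ^ (s - 1) * S) * D) :=
      hA.trans (mul_le_mul_of_nonneg_left
        (mul_le_mul_of_nonneg_right hTle hD0) (by linarith))
    exact step.trans (le_of_eq (by ring))
  · -- right inequality
    have hSle : S ≤ 2 ^ q * T :=
      hS2.trans (mul_le_mul_of_nonneg_left hT1 h2q.le)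
    have h1 : D * S ≤ D * (2 ^ q * T) := mul_le_mul_of_nonneg_left hSle hD0
    have h2 : 2 ^ q * (T * D) ≤ 2 ^ q * (2 ^ s * E) :=
      mul_le_mul_of_nonneg_left hB h2q.le
    calc D * S ≤ D * (2 ^ q * T) := h1
      _ = 2 ^ q * (T * D) := by ring
      _ ≤ 2 ^ q * (2 ^ s * E) := h2
      _ = (2 ^ q * 2 ^ s) * E := by ring

/-- Let `n ∈ ℕ` and `0 < α < ε`. Then there exist positive constants
`β₁ = β₁(α,ε)` and `β₂ = β₂(α,ε,n)` such that for every `ξ, η ∈ ℝ^n`,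
`β₁ |H_ε(ξ) − H_ε(η)| ≤ |H_α(ξ) − H_α(η)| · ((|ξ|−1)₊^ε + (|η|−1)₊^ε)^((ε−α)/ε)
  ≤ β₂ |H_ε(ξ) − H_ε(η)|`. -/
theorem stmt_4 (n : ℕ) (α ε : ℝ) (hα : 0 < α) (hε : 0 < ε) (hαε : α < ε) :
    ∃ β₁ : ℝ, 0 < β₁ ∧ ∃ β₂ : ℝ, 0 < β₂ ∧ ∀ ξ η : EuclideanSpace ℝ (Fin n),
      β₁ * ‖Hfun ε ξ - Hfun ε η‖ ≤
        ‖Hfun α ξ - Hfun α η‖ *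
          ((max (‖ξ‖ - 1) 0) ^ ε + (max (‖η‖ - 1) 0) ^ ε) ^ ((ε - α) / ε) ∧
      ‖Hfun α ξ - Hfun α η‖ *
          ((max (‖ξ‖ - 1) 0) ^ ε + (max (‖η‖ - 1) 0) ^ ε) ^ ((ε - α) / ε) ≤
        β₂ * ‖Hfun ε ξ - Hfun ε η‖ := by
  have hs : 1 < ε / α := (one_lt_div hα).2 hαε
  refine ⟨((1 + ε / α) * 2 ^ (ε / α - 1))⁻¹, ?_, 2 ^ ((ε - α) / ε) * 2 ^ (ε / α), ?_, ?_⟩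
  · have h2s1 : (0:ℝ) < 2 ^ (ε / α - 1) := Real.rpow_pos_of_pos (by norm_num) _
    have : (0:ℝ) < (1 + ε / α) * 2 ^ (ε / α - 1) := by nlinarith
    exact inv_pos.2 this
  · have h1 : (0:ℝ) < 2 ^ ((ε - α) / ε) := Real.rpow_pos_of_pos (by norm_num) _
    have h2 : (0:ℝ) < 2 ^ (ε / α) := Real.rpow_pos_of_pos (by norm_num) _
    exact mul_pos h1 h2
  · intro ξ η
    rcases le_total (max (‖η‖ - 1) 0) (max (‖ξ‖ - 1) 0) with hc | hc
    · exact main_pair hα hε hαε ξ η hc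
    · obtain ⟨h1, h2⟩ := main_pair hα hε hαε η ξ hc
      rw [norm_sub_rev (Hfun ε η), norm_sub_rev (Hfun α η),
        add_comm ((max (‖η‖ - 1) 0) ^ ε)] at h1 h2
      exact ⟨h1, h2⟩
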